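/- For every real number α with 0 < α < 1 and every natural number j, the sequence ℓ ↦ ℓ! / (ℓ^{(1−α)ℓ} · Γ(αℓ + j + 1)) tends to 0 as ℓ → ∞. -/

import Mathlib

open Real Filter

lemma aux_pow_le (n : ℕ) : ((n : ℝ) + 1) ^ n ≤ Real.exp 1 * (n : ℝ) ^ n := by
  rcases Nat.eq_zero_or_pos n with h | h
  · subst h; simpa using Real.one_le_exp zero_le_one
  · have hn : (0:ℝ) < n := by exact_mod_cast h
    have h1 : (n : ℝ) + 1 ≤ (n : ℝ) * Real.exp (1 / n) := by
      have h0 := Real.add_one_le_exp (1 / (n:ℝ))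
      calc (n:ℝ) + 1 = (n:ℝ) * (1/n + 1) := by field_simp; ring
        _ ≤ (n:ℝ) * Real.exp (1/n) := by nlinarith
    calc ((n:ℝ)+1)^n ≤ ((n:ℝ) * Real.exp (1/n))^n :=
          pow_le_pow_left₀ (by positivity) h1 n
      _ = (n:ℝ)^n * Real.exp (1/n) ^ n := mul_pow _ _ _
      _ = (n:ℝ)^n * Real.exp 1 := by
          rw [← Real.exp_nat_mul]; congr 1; field_simp
      _ = Real.exp 1 * (n:ℝ)^n := mul_comm _ _

lemma aux_pow_le' (n : ℕ) (hn : 1 ≤ n) :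
    Real.exp 1 * (n : ℝ) ^ (n+1) ≤ ((n : ℝ) + 1) ^ (n+1) := by
  have hn0 : (0:ℝ) < n := by exact_mod_cast hn
  set x : ℝ := 1 / ((n:ℝ)+1) with hx
  have hx1 : 1 - x = (n:ℝ) / ((n:ℝ)+1) := by rw [hx]; field_simp; ring
  have h5 : (1 - x) * Real.exp x ≤ 1 := by
    have := Real.add_one_le_exp (-x)
    have h6 : (1 - x) * Real.exp x ≤ Real.exp (-x) * Real.exp x :=
      mul_le_mul_of_nonneg_right (by linarith) (Real.exp_pos x).le
    rwa [← Real.exp_add, neg_add_cancel, Real.exp_zero] at h6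
  have h4 : (n:ℝ) * Real.exp x ≤ (n:ℝ)+1 := by
    rw [hx1] at h5
    have := mul_le_mul_of_nonneg_right h5 (by positivity : (0:ℝ) ≤ (n:ℝ)+1)
    calc (n:ℝ) * Real.exp x = (n:ℝ)/((n:ℝ)+1) * Real.exp x * ((n:ℝ)+1) := by field_simp
      _ ≤ 1 * ((n:ℝ)+1) := this
      _ = (n:ℝ)+1 := one_mul _
  calc Real.exp 1 * (n:ℝ)^(n+1) = (Real.exp x)^(n+1) * (n:ℝ)^(n+1) := by
        rw [← Real.exp_nat_mul]; congr 2; rw [hx]; field_simp; norm_cast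
    _ = ((n:ℝ) * Real.exp x)^(n+1) := by rw [mul_pow]; ring
    _ ≤ ((n:ℝ)+1)^(n+1) := pow_le_pow_left₀ (by positivity) h4 _

lemma fact_lb (n : ℕ) : ((n : ℝ) / Real.exp 1) ^ n ≤ (n.factorial : ℝ) := by
  induction n with
  | zero => simp
  | succ n ih =>
    have hE := Real.exp_pos 1
    have key : (((n:ℝ)+1) / Real.exp 1) ^ (n+1) ≤ ((n:ℝ)+1) * ((n:ℝ) / Real.exp 1) ^ n := by
      rw [div_pow, div_pow]
      rw [div_le_iff₀ (by positivity), pow_succ, mul_comm ((n:ℝ)+1)]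
      calc ((n:ℝ)+1)^n * ((n:ℝ)+1) ≤ Real.exp 1 * (n:ℝ)^n * ((n:ℝ)+1) := by
            have := aux_pow_le n
            nlinarith [pow_nonneg (by positivity : (0:ℝ) ≤ (n:ℝ)) n]
        _ = (n:ℝ)^n / Real.exp 1 ^ n * ((n:ℝ)+1) * Real.exp 1 ^ (n+1) := by
            rw [pow_succ]; field_simp
    calc (((n+1:ℕ):ℝ) / Real.exp 1) ^ (n+1) = (((n:ℝ)+1) / Real.exp 1) ^ (n+1) := by
          push_cast; ring_nf
      _ ≤ ((n:ℝ)+1) * ((n:ℝ) / Real.exp 1) ^ n := key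
      _ ≤ ((n:ℝ)+1) * (n.factorial : ℝ) := by
          apply mul_le_mul_of_nonneg_left ih (by positivity)
      _ = ((n+1).factorial : ℝ) := by push_cast [Nat.factorial_succ]; ring

lemma fact_ub (n : ℕ) (hn : 1 ≤ n) :
    (n.factorial : ℝ) ≤ Real.exp 1 * n * ((n : ℝ) / Real.exp 1) ^ n := by
  induction n with
  | zero => omega
  | succ n ih =>
    rcases Nat.eq_zero_or_pos n with h | h
    · subst h
      have : Real.exp 1 * ((1:ℕ):ℝ) * (((1:ℕ):ℝ) / Real.exp 1) ^ 1 = 1 := by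
        rw [pow_one]; push_cast; field_simp
      rw [this]; norm_num [Nat.factorial]
    · have ihn := ih h
      have hn0 : (0:ℝ) < n := by exact_mod_cast h
      have hE := Real.exp_pos 1
      have key : (n:ℝ) * ((n:ℝ) / Real.exp 1) ^ n ≤ (((n:ℝ)+1) / Real.exp 1) ^ (n+1) := by
        rw [div_pow, div_pow, ← mul_div_assoc, div_le_div_iff₀ (by positivity) (by positivity)]
        calc (n:ℝ) * (n:ℝ)^n * Real.exp 1 ^ (n+1)
            = (Real.exp 1 * (n:ℝ)^(n+1)) * Real.exp 1 ^ n := by rw [pow_succ]; ring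
          _ ≤ ((n:ℝ)+1)^(n+1) * Real.exp 1 ^ n := by
              have := aux_pow_le' n h
              exact mul_le_mul_of_nonneg_right this (by positivity)
      calc ((n+1).factorial : ℝ) = ((n:ℝ)+1) * (n.factorial : ℝ) := by
            push_cast [Nat.factorial_succ]; ring
        _ ≤ ((n:ℝ)+1) * (Real.exp 1 * n * ((n:ℝ) / Real.exp 1) ^ n) :=
            mul_le_mul_of_nonneg_left ihn (by positivity)
        _ = Real.exp 1 * ((n:ℝ)+1) * ((n:ℝ) * ((n:ℝ) / Real.exp 1) ^ n) := by ring
        _ ≤ Real.exp 1 * ((n:ℝ)+1) * (((n:ℝ)+1) / Real.exp 1) ^ (n+1) :=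
            mul_le_mul_of_nonneg_left key (by positivity)
        _ = Real.exp 1 * ((n+1:ℕ):ℝ) * (((n+1:ℕ):ℝ) / Real.exp 1) ^ (n+1) := by push_cast; ring

lemma c0_pos {α : ℝ} (hα0 : 0 < α) (hα1 : α < 1) : 0 < 1 - α + α * Real.log α := by
  have h := Real.log_lt_sub_one_of_pos (x := 1/α) (by positivity) (by
    intro h; rw [div_eq_one_iff_eq hα0.ne'] at h; linarith)
  rw [Real.log_div one_ne_zero hα0.ne', Real.log_one] at h
  have h2 := mul_lt_mul_of_pos_left h hα0
  have h3 : α * (1/α - 1) = 1 - α := by field_simp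
  nlinarith

set_option maxHeartbeats 1000000 in
/-- Limit claim (2.15) in the proof of Lemma 2.2(i): for `0 < α < 1` and any `j : ℕ`,
`ℓ! / (ℓ^{(1−α)ℓ} Γ(αℓ + j + 1)) → 0` as `ℓ → ∞`. -/
theorem factorial_div_rpow_gamma_tendsto_zero (α : ℝ) (hα0 : 0 < α) (hα1 : α < 1) (j : ℕ) :
    Filter.Tendsto
      (fun ℓ : ℕ =>
        (Nat.factorial ℓ : ℝ) /
          ((ℓ : ℝ) ^ ((1 - α) * ℓ) * Real.Gamma (α * ℓ + j + 1)))
      Filter.atTop (nhds 0) := by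
  set E := Real.exp 1 with hE
  have hEpos : 0 < E := Real.exp_pos 1
  have hE1 : 1 ≤ E := Real.one_le_exp zero_le_one
  set c : ℝ := 1 - α + α * Real.log α with hc
  have hcpos : 0 < c := c0_pos hα0 hα1
  set ε : ℝ := Real.exp (c / (2 * α)) - 1 with hεdef
  have hεpos : 0 < ε := by
    have : (1:ℝ) < Real.exp (c / (2*α)) := by
      rw [Real.one_lt_exp_iff]
      positivity
    rw [hεdef]; linarith
  have hlogε : Real.log (1 + ε) = c / (2 * α) := by
    rw [hεdef]; rw [add_sub_cancel]; exact Real.log_exp _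
  set K : ℝ := (1 + ε) / α * E with hK
  have hKpos : 0 < K := by positivity
  have hK1 : 1 ≤ K := by
    rw [hK]
    have h1 : 1 ≤ (1 + ε) / α := by
      rw [le_div_iff₀ hα0]; nlinarith
    nlinarith
  have hlogK : α * Real.log K = α + c / 2 - α * Real.log α := by
    rw [hK, Real.log_mul (by positivity) hEpos.ne', Real.log_div (by positivity) hα0.ne',
      hlogε, hE, Real.log_exp]
    field_simp
    ring
  have hrate : ∀ x : ℝ, α * x * Real.log K - x = -(c/2) * x := by
    intro x
    have : α * Real.log K - 1 = -(c/2) := by rw [hlogK, hc]; ring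
    calc α * x * Real.log K - x = (α * Real.log K - 1) * x := by ring
      _ = -(c/2) * x := by rw [this]
  -- the bound sequence tends to 0
  have hbound : Filter.Tendsto (fun ℓ : ℕ => E * (ℓ:ℝ)^2 * Real.exp (-(c/2) * ℓ))
      Filter.atTop (nhds 0) := by
    have h1 : Filter.Tendsto (fun ℓ : ℕ => (c/2) * (ℓ:ℝ)) Filter.atTop Filter.atTop :=
      (tendsto_natCast_atTop_atTop).const_mul_atTop (by positivity)
    have h2 := (tendsto_pow_mul_exp_neg_atTop_nhds_zero 2).comp h1
    have h3 : Filter.Tendsto (fun ℓ : ℕ => E * (2/c)^2 * (((c/2) * (ℓ:ℝ))^2 * Real.exp (-((c/2) * ℓ)))) Filter.atTop (nhds (E * (2/c)^2 * 0)) := h2.const_mul _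
    rw [mul_zero] at h3
    convert h3 using 2 with ℓ
    have hc' : c ≠ 0 := hcpos.ne'
    field_simp
  apply squeeze_zero' ?nonneg ?le hbound
  case nonneg =>
    filter_upwards [Filter.eventually_atTop.2 ⟨1, fun ℓ h => h⟩] with ℓ hℓ
    have hΓ : 0 < Real.Gamma (α * ℓ + j + 1) :=
      Real.Gamma_pos_of_pos (by positivity)
    positivity
  case le =>
    have hT : Filter.Tendsto (fun ℓ : ℕ => α * (ℓ:ℝ)) Filter.atTop Filter.atTop :=
      (tendsto_natCast_atTop_atTop).const_mul_atTop hα0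
    filter_upwards [hT.eventually_ge_atTop 1, hT.eventually_ge_atTop ((1+ε)/ε),
      Filter.eventually_ge_atTop 1] with ℓ h1 h2 h3
    set L : ℝ := (ℓ:ℝ) with hLdef
    have hL1 : 1 ≤ L := by rw [hLdef]; exact_mod_cast h3
    have hLpos : 0 < L := lt_of_lt_of_le one_pos hL1
    set m : ℕ := ⌊α * L⌋₊ with hm
    have hm1 : 1 ≤ m := Nat.le_floor (by exact_mod_cast h1)
    have hm0 : (0:ℝ) < m := by exact_mod_cast hm1
    have hmle : (m:ℝ) ≤ α * L := Nat.floor_le (by positivity)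
    have hmgt : α * L < (m:ℝ) + 1 := Nat.lt_floor_add_one _
    have hmL : (m:ℝ) ≤ L := le_trans hmle (by nlinarith [mul_nonneg (by linarith : (0:ℝ) ≤ 1-α) hLpos.le])
    have hεm : α * L ≤ (1 + ε) * m := by
      have h2' : 1 + ε ≤ ε * (α * L) := by
        rw [div_le_iff₀ hεpos] at h2; linarith
      nlinarith
    have hΓpos : 0 < Real.Gamma (α * L + j + 1) := Real.Gamma_pos_of_pos (by positivity)
    have hrpow_pos : 0 < L ^ ((1-α) * ℓ) := Real.rpow_pos_of_pos hLpos _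
    -- Gamma lower bound by m!
    have hΓge : (m.factorial : ℝ) ≤ Real.Gamma (α * L + j + 1) := by
      have hmono := Real.Gamma_strictMonoOn_Ici.monotoneOn
      have hmem1 : ((m:ℝ) + 1) ∈ Set.Ici (2:ℝ) := by
        simp only [Set.mem_Ici]; linarith [hm0, (by exact_mod_cast hm1 : (1:ℝ) ≤ (m:ℝ))]
      have hmem2 : (α * L + j + 1) ∈ Set.Ici (2:ℝ) := by
        simp only [Set.mem_Ici]
        have : (0:ℝ) ≤ j := Nat.cast_nonneg j
        linarith
      have hle : (m:ℝ) + 1 ≤ α * L + j + 1 := by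
        have : (0:ℝ) ≤ j := Nat.cast_nonneg j
        linarith
      have := hmono hmem1 hmem2 hle
      rwa [Real.Gamma_nat_eq_factorial] at this
    have hfl : ((m:ℝ)/E)^m ≤ (m.factorial : ℝ) := fact_lb m
    have hfu : (ℓ.factorial : ℝ) ≤ E * L * (L/E)^ℓ := fact_ub ℓ h3
    have hmE : (0:ℝ) < ((m:ℝ)/E)^m := by positivity
    calc (ℓ.factorial : ℝ) / (L ^ ((1-α) * ℓ) * Real.Gamma (α * L + j + 1))
        ≤ (E * L * (L/E)^ℓ) / (L ^ ((1-α) * ℓ) * (((m:ℝ)/E)^m)) := by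
          apply div_le_div₀ (by positivity) hfu (by positivity)
          exact mul_le_mul_of_nonneg_left (le_trans hfl hΓge) hrpow_pos.le
      _ = E * L * L ^ (α * L) * Real.exp ((m:ℝ) - L) / (m:ℝ)^m := by
          rw [div_pow, div_pow, hE, Real.exp_one_pow, Real.exp_one_pow]
          rw [Real.exp_sub]
          have hLl : L ^ ℓ = L ^ ((ℓ:ℝ)) := (Real.rpow_natCast L ℓ).symm
          have h4 : L ^ ((ℓ:ℝ)) = L ^ (α * L) * L ^ ((1-α) * ℓ) := by
            rw [← Real.rpow_add hLpos]; congr 1; push_cast; ring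
          rw [hLl, h4]
          have hne1 : L ^ ((1-α) * (ℓ:ℝ)) ≠ 0 := hrpow_pos.ne'
          have hne2 : Real.exp (ℓ:ℝ) ≠ 0 := (Real.exp_pos _).ne'
          have hne3 : Real.exp (m:ℝ) ≠ 0 := (Real.exp_pos _).ne'
          have hne4 : ((m:ℝ))^m ≠ 0 := by positivity
          field_simp
          ring
      _ ≤ E * L * L ^ ((m:ℝ) + 1) * Real.exp ((m:ℝ) - L) / (m:ℝ)^m := by
          have h7 := Real.rpow_le_rpow_of_exponent_le hL1 hmgt.le
          have hnn : (0:ℝ) ≤ Real.exp ((m:ℝ) - L) := (Real.exp_pos _).le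
          apply div_le_div_of_nonneg_right ?_ (by positivity)
          exact mul_le_mul_of_nonneg_right
            (mul_le_mul_of_nonneg_left h7 (by positivity)) hnn
      _ = E * L^2 * ((L/(m:ℝ))^m * Real.exp (m:ℝ)) * Real.exp (-L) := by
          rw [show ((m:ℝ) + 1 : ℝ) = ((m+1 : ℕ) : ℝ) by push_cast; ring,
            Real.rpow_natCast, Real.exp_sub, div_pow, pow_succ]
          have hne4 : ((m:ℝ))^m ≠ 0 := by positivity
          have hne2 : Real.exp L ≠ 0 := (Real.exp_pos _).ne'
          rw [Real.exp_neg]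
          field_simp
      _ ≤ E * L^2 * (((1+ε)/α)^m * Real.exp (m:ℝ)) * Real.exp (-L) := by
          have hdiv : L/(m:ℝ) ≤ (1+ε)/α := by
            rw [div_le_div_iff₀ hm0 hα0]; nlinarith
          have : (L/(m:ℝ))^m ≤ ((1+ε)/α)^m :=
            pow_le_pow_left₀ (by positivity) hdiv m
          have hnn : (0:ℝ) ≤ Real.exp (m:ℝ) := (Real.exp_pos _).le
          have h5 : (L/(m:ℝ))^m * Real.exp (m:ℝ) ≤ ((1+ε)/α)^m * Real.exp (m:ℝ) :=
            mul_le_mul_of_nonneg_right this hnn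
          nlinarith [sq_nonneg L, Real.exp_pos (-L), mul_le_mul_of_nonneg_right h5 (Real.exp_pos (-L)).le, mul_le_mul_of_nonneg_left (mul_le_mul_of_nonneg_right h5 (Real.exp_pos (-L)).le) (by positivity : (0:ℝ) ≤ E * L^2)]
      _ = E * L^2 * K^m * Real.exp (-L) := by
          rw [hK, mul_pow, ← Real.exp_one_pow, ← hE]
      _ ≤ E * L^2 * K^(α * L) * Real.exp (-L) := by
          have : (K:ℝ)^m = K ^ ((m:ℝ)) := (Real.rpow_natCast K m).symm
          rw [this]
          have h6 := Real.rpow_le_rpow_of_exponent_le hK1 hmle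
          have hnn : (0:ℝ) ≤ Real.exp (-L) := (Real.exp_pos _).le
          exact mul_le_mul_of_nonneg_right
            (mul_le_mul_of_nonneg_left h6 (by positivity)) hnn
      _ = E * L^2 * Real.exp (-(c/2) * L) := by
          have hKe : K^(α * L) * Real.exp (-L) = Real.exp (-(c/2) * L) := by
            rw [Real.rpow_def_of_pos hKpos, ← Real.exp_add]
            congr 1
            linarith [hrate L]
          rw [mul_assoc, hKe]
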